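/- If ρ₁ and ρ₂ are faithful complex representations of finite abelian groups A and B respectively on the same finite-dimensional space, and there is a bijection γ : A → B such that ρ₂(γ(a)) is conjugate in GL(V) to ρ₁(a) for all a ∈ A (i.e. the representations are almost conjugate / Gassmann equivalent), then A and B are isomorphic. -/

import Mathlib

lemma zmod_count (n m : ℕ) (hm : m ≠ 0) :
    Nat.card {y : ZMod m // n • y = 0} = Nat.gcd n m := by
  haveI : NeZero m := ⟨hm⟩
  set φ : ZMod m →+ ZMod m := nsmulAddMonoidHom n with hφ
  have hrange : φ.range = AddSubgroup.zmultiples ((n : ZMod m)) := by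
    ext x
    constructor
    · rintro ⟨y, rfl⟩
      refine ⟨(y.val : ℤ), ?_⟩
      simp [hφ, nsmul_eq_mul, zsmul_eq_mul, mul_comm]
    · rintro ⟨k, rfl⟩
      refine ⟨(k : ZMod m), ?_⟩
      simp [hφ, nsmul_eq_mul, zsmul_eq_mul, mul_comm]
  have hcr : Nat.card φ.range = m / Nat.gcd m n := by
    rw [hrange, Nat.card_zmultiples]
    exact ZMod.addOrderOf_coe n hm
  have h1 : Nat.card (ZMod m) = Nat.card (ZMod m ⧸ φ.ker) * Nat.card φ.ker :=
    AddSubgroup.card_eq_card_quotient_mul_card_addSubgroup _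
  have h2 : Nat.card (ZMod m ⧸ φ.ker) = m / Nat.gcd m n := by
    rw [Nat.card_congr (QuotientAddGroup.quotientKerEquivRange φ).toEquiv, hcr]
  have h3 : Nat.card {y : ZMod m // n • y = 0} = Nat.card φ.ker := by
    apply Nat.card_congr
    exact Equiv.subtypeEquiv (Equiv.refl _) (fun y => by
      simp [hφ, AddMonoidHom.mem_ker])
  rw [h3]
  have hmcard : Nat.card (ZMod m) = m := by simp [Nat.card_eq_fintype_card, ZMod.card]
  rw [hmcard, h2] at h1
  have hg : Nat.gcd m n ∣ m := Nat.gcd_dvd_left m n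
  have hgpos : 0 < Nat.gcd m n := Nat.gcd_pos_of_pos_left n (Nat.pos_of_ne_zero hm)
  have hd : m / Nat.gcd m n ≠ 0 := by
    have := Nat.div_pos (Nat.le_of_dvd (Nat.pos_of_ne_zero hm) hg) hgpos
    omega
  have : (m / Nat.gcd m n) * Nat.gcd m n = m := Nat.div_mul_cancel hg
  rw [Nat.gcd_comm]
  exact Nat.eq_of_mul_eq_mul_left (Nat.pos_of_ne_zero hd) (by omega)

lemma pi_count {ι : Type*} [Fintype ι] (q : ι → ℕ) (hq : ∀ i, q i ≠ 0) (n : ℕ) :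
    Nat.card {x : (∀ i, ZMod (q i)) // n • x = 0} = ∏ i, Nat.gcd n (q i) := by
  have e : {x : (∀ i, ZMod (q i)) // n • x = 0} ≃ ∀ i, {y : ZMod (q i) // n • y = 0} := by
    refine (Equiv.subtypeEquiv (Equiv.refl _) (fun x => ?_)).trans Equiv.subtypePiEquivPi
    simp [funext_iff]
  rw [Nat.card_congr e, Nat.card_pi]
  exact Finset.prod_congr rfl fun i _ => zmod_count n (q i) (hq i)

-- gcd of prime powers
lemma gcd_primepow (P p k e : ℕ) (hP : P.Prime) (hp : p.Prime) :
    Nat.gcd (P ^ k) (p ^ e) = P ^ (if p = P then min k e else 0) := by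
  split_ifs with h
  · subst h
    rcases le_total k e with hke | hek
    · rw [Nat.gcd_eq_left (pow_dvd_pow p hke), min_eq_left hke]
    · rw [Nat.gcd_eq_right (pow_dvd_pow p hek), min_eq_right hek]
  · have hc : Nat.Coprime P p := (Nat.coprime_primes hP hp).mpr (Ne.symm h)
    rw [pow_zero]
    exact Nat.Coprime.pow k e hc

lemma primepow_eq (p P e K : ℕ) (hp : p.Prime) (hP : P.Prime) (hK : 1 ≤ K)
    (h : p ^ e = P ^ K) : p = P ∧ e = K := by
  have he : e ≠ 0 := by
    rintro rfl
    have : 1 < P ^ K := Nat.one_lt_pow (by omega) hP.one_lt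
    simp at h; omega
  have hpP : p = P := by
    have : p ∣ P ^ K := h ▸ dvd_pow_self p he
    exact (Nat.prime_dvd_prime_iff_eq hp hP).mp (hp.dvd_of_dvd_pow this)
  subst hpP
  exact ⟨rfl, Nat.pow_right_injective hp.two_le h⟩

open Finset in
lemma core {ι κ : Type*} [Fintype ι] [Fintype κ] (p : ι → ℕ) (e : ι → ℕ)
    (q : κ → ℕ) (f : κ → ℕ) (hp : ∀ i, (p i).Prime) (hq : ∀ j, (q j).Prime)
    (h : ∀ n, ∏ i, Nat.gcd n (p i ^ e i) = ∏ j, Nat.gcd n (q j ^ f j))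
    (v : ℕ) (hv : v ≠ 1) :
    Nat.card {i // p i ^ e i = v} = Nat.card {j // q j ^ f j = v} := by
  classical
  -- reduce to filter cards
  rw [Nat.card_eq_fintype_card, Nat.card_eq_fintype_card,
    Fintype.card_subtype, Fintype.card_subtype]
  by_cases hpp : ∃ P K, P.Prime ∧ 1 ≤ K ∧ v = P ^ K
  · obtain ⟨P, K, hP, hK, rfl⟩ := hpp
    -- exponent sums
    have hg : ∀ k, (∑ i, if p i = P then min k (e i) else 0)
        = ∑ j, if q j = P then min k (f j) else 0 := by
      intro k
      apply Nat.pow_right_injective hP.two_le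
      have := h (P ^ k)
      rwa [prod_congr rfl (fun i _ => gcd_primepow P (p i) k (e i) hP (hp i)),
        prod_congr rfl (fun j _ => gcd_primepow P (q j) k (f j) hP (hq j)),
        Finset.prod_pow_eq_pow_sum, Finset.prod_pow_eq_pow_sum] at this
    -- N counts
    set NA : ℕ → ℕ := fun k => ∑ i, if p i = P ∧ k ≤ e i then 1 else 0 with hNA
    set NB : ℕ → ℕ := fun k => ∑ j, if q j = P ∧ k ≤ f j then 1 else 0 with hNB
    have hstepA : ∀ k, (∑ i, if p i = P then min (k+1) (e i) else 0)
        = (∑ i, if p i = P then min k (e i) else 0) + NA (k+1) := by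
      intro k
      rw [hNA, ← Finset.sum_add_distrib]
      exact Finset.sum_congr rfl fun i _ => by split_ifs <;> omega
    have hstepB : ∀ k, (∑ j, if q j = P then min (k+1) (f j) else 0)
        = (∑ j, if q j = P then min k (f j) else 0) + NB (k+1) := by
      intro k
      rw [hNB, ← Finset.sum_add_distrib]
      exact Finset.sum_congr rfl fun j _ => by split_ifs <;> omega
    have hN : ∀ k, 1 ≤ k → NA k = NB k := by
      intro k0 hk
      obtain ⟨k, rfl⟩ : ∃ k', k0 = k' + 1 := ⟨k0 - 1, by omega⟩
      have h1 := (hstepA k).symm.trans ((hg (k+1)).trans (hstepB k))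
      rw [hg k] at h1
      omega
    -- exact counts
    have hMA : ∀ k, NA (k+1) = (∑ i, if p i = P ∧ e i = k+1 then 1 else 0) + NA (k+2) := by
      intro k
      rw [hNA, ← Finset.sum_add_distrib]
      exact Finset.sum_congr rfl fun i _ => by split_ifs <;> omega
    have hMB : ∀ k, NB (k+1) = (∑ j, if q j = P ∧ f j = k+1 then 1 else 0) + NB (k+2) := by
      intro k
      rw [hNB, ← Finset.sum_add_distrib]
      exact Finset.sum_congr rfl fun j _ => by split_ifs <;> omega
    obtain ⟨K', rfl⟩ : ∃ K', K = K' + 1 := ⟨K - 1, by omega⟩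
    have hM : (∑ i, if p i = P ∧ e i = K'+1 then 1 else 0)
        = ∑ j, if q j = P ∧ f j = K'+1 then 1 else 0 := by
      have h1 := (hMA K').symm.trans ((hN (K'+1) (by omega)).trans (hMB K'))
      have h2 := hN (K'+2) (by omega)
      omega
    rw [Finset.card_filter, Finset.card_filter]
    calc (∑ i, if p i ^ e i = P ^ (K'+1) then 1 else 0)
        = ∑ i, if p i = P ∧ e i = K'+1 then 1 else 0 := by
          refine Finset.sum_congr rfl fun i _ => ?_
          congr 1
          simp only [eq_iff_iff]
          constructor
          · exact fun hh => primepow_eq (p i) P (e i) (K'+1) (hp i) hP (by omega) hh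
          · rintro ⟨rfl, h2⟩; rw [h2]
      _ = ∑ j, if q j = P ∧ f j = K'+1 then 1 else 0 := hM
      _ = ∑ j, if q j ^ f j = P ^ (K'+1) then 1 else 0 := by
          refine Finset.sum_congr rfl fun j _ => ?_
          congr 1
          simp only [eq_iff_iff]
          constructor
          · rintro ⟨rfl, h2⟩; rw [h2]
          · exact fun hh => primepow_eq (q j) P (f j) (K'+1) (hq j) hP (by omega) hh
  · -- v not a prime power: both empty
    have hA : ∀ i ∈ Finset.univ, ¬ (p i ^ e i = v) := by
      intro i _ hi
      refine hpp ⟨p i, e i, hp i, ?_, hi.symm⟩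
      rcases Nat.eq_zero_or_pos (e i) with h0 | h0
      · exfalso; apply hv; rw [← hi, h0, pow_zero]
      · omega
    have hB : ∀ j ∈ Finset.univ, ¬ (q j ^ f j = v) := by
      intro j _ hj
      refine hpp ⟨q j, f j, hq j, ?_, hj.symm⟩
      rcases Nat.eq_zero_or_pos (f j) with h0 | h0
      · exfalso; apply hv; rw [← hj, h0, pow_zero]
      · omega
    rw [Finset.filter_eq_empty_iff.mpr hA, Finset.filter_eq_empty_iff.mpr hB]
    rfl

def dropTriv {ι : Type*} (M : ι → Type*) [∀ i, AddZeroClass (M i)]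
    (P : ι → Prop) [DecidablePred P] (h : ∀ i, ¬ P i → Subsingleton (M i)) :
    (∀ i, M i) ≃+ (∀ i : {i // P i}, M i.1) where
  toFun x i := x i.1
  invFun y i := if hi : P i then y ⟨i, hi⟩ else 0
  left_inv x := funext fun i => by
    dsimp only
    split_ifs with hi
    · rfl
    · exact @Subsingleton.elim _ (h i hi) _ _
  right_inv y := funext fun i => by simp [i.2]
  map_add' x y := rfl

lemma buildEquiv {ι κ : Type*} [Fintype ι] [Fintype κ] (q : ι → ℕ) (r : κ → ℕ)
    (h : ∀ v, v ≠ 1 → Nat.card {i // q i = v} = Nat.card {j // r j = v}) :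
    Nonempty ((∀ i, ZMod (q i)) ≃+ (∀ j, ZMod (r j))) := by
  classical
  -- sigma decompositions
  let E1 : {i // q i ≠ 1} ≃ Σ v : {v : ℕ // v ≠ 1}, {i // q i = v.1} :=
    { toFun := fun i => ⟨⟨q i.1, i.2⟩, ⟨i.1, rfl⟩⟩
      invFun := fun x => ⟨x.2.1, by rw [x.2.2]; exact x.1.2⟩
      left_inv := fun i => rfl
      right_inv := by
        rintro ⟨⟨v, hv⟩, ⟨i, hi⟩⟩
        simp only [Subtype.coe_mk] at hi
        subst hi
        rfl }
  let E2 : {j // r j ≠ 1} ≃ Σ v : {v : ℕ // v ≠ 1}, {j // r j = v.1} :=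
    { toFun := fun j => ⟨⟨r j.1, j.2⟩, ⟨j.1, rfl⟩⟩
      invFun := fun x => ⟨x.2.1, by rw [x.2.2]; exact x.1.2⟩
      left_inv := fun j => rfl
      right_inv := by
        rintro ⟨⟨v, hv⟩, ⟨j, hj⟩⟩
        simp only [Subtype.coe_mk] at hj
        subst hj
        rfl }
  have fib : ∀ v : {v : ℕ // v ≠ 1}, {i // q i = v.1} ≃ {j // r j = v.1} := fun v => by
    apply Fintype.equivOfCardEq
    have := h v.1 v.2
    rwa [Nat.card_eq_fintype_card, Nat.card_eq_fintype_card] at this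
  let σ : {i // q i ≠ 1} ≃ {j // r j ≠ 1} :=
    E1.trans ((Equiv.sigmaCongrRight fib).trans E2.symm)
  have hσ : ∀ i, r (σ i).1 = q i.1 := fun i =>
    (fib ⟨q i.1, i.2⟩ ⟨i.1, rfl⟩).2
  -- assemble
  have sA : ∀ i : ι, ¬ q i ≠ 1 → Subsingleton (ZMod (q i)) := by
    intro i hi
    rw [not_not.mp hi]
    infer_instance
  have sB : ∀ j : κ, ¬ r j ≠ 1 → Subsingleton (ZMod (r j)) := by
    intro j hj
    rw [not_not.mp hj]
    infer_instance
  let mid : (∀ i : {i // q i ≠ 1}, ZMod (q i.1)) ≃+ (∀ j : {j // r j ≠ 1}, ZMod (r j.1)) :=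
    (AddEquiv.piCongrRight fun i =>
      (ZMod.ringEquivCongr (hσ i).symm).toAddEquiv).trans
    (RingEquiv.piCongrLeft (fun j : {j // r j ≠ 1} => ZMod (r j.1)) σ).toAddEquiv
  exact ⟨((dropTriv (fun i => ZMod (q i)) _ sA).trans mid).trans
    (dropTriv (fun j => ZMod (r j)) _ sB).symm⟩

lemma main_abelian {A B : Type*} [CommGroup A] [Fintype A] [CommGroup B] [Fintype B]
    (h : ∀ n : ℕ, Nat.card {a : A // a ^ n = 1} = Nat.card {b : B // b ^ n = 1}) :
    Nonempty (A ≃* B) := by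
  obtain ⟨ι, fι, p, hp, e, ⟨eA⟩⟩ := AddCommGroup.equiv_directSum_zmod_of_finite (Additive A)
  obtain ⟨κ, fκ, q, hq, f, ⟨eB⟩⟩ := AddCommGroup.equiv_directSum_zmod_of_finite (Additive B)
  let eA' : Additive A ≃+ ∀ i, ZMod (p i ^ e i) := eA.trans (DirectSum.addEquivProd _)
  let eB' : Additive B ≃+ ∀ j, ZMod (q j ^ f j) := eB.trans (DirectSum.addEquivProd _)
  have hpz : ∀ i, p i ^ e i ≠ 0 := fun i => pow_ne_zero _ (hp i).pos.ne'
  have hqz : ∀ j, q j ^ f j ≠ 0 := fun j => pow_ne_zero _ (hq j).pos.ne'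
  have cA : ∀ n : ℕ, Nat.card {a : A // a ^ n = 1} = ∏ i, Nat.gcd n (p i ^ e i) := by
    intro n
    rw [← pi_count _ hpz n]
    apply Nat.card_congr
    refine (Equiv.subtypeEquiv (q := fun x : Additive A => n • x = 0)
        Additive.ofMul fun a => ?_).trans
      (Equiv.subtypeEquiv eA'.toEquiv fun x => ?_)
    · show a ^ n = 1 ↔ n • Additive.ofMul a = 0
      rw [← ofMul_pow]
      exact ⟨fun ha => by rw [ha]; rfl, fun ha => ha⟩
    · show n • x = 0 ↔ n • eA' x = 0
      rw [← map_nsmul]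
      exact ⟨fun hx => by rw [hx, map_zero], fun hx =>
        eA'.injective (by rw [hx, map_zero])⟩
  have cB : ∀ n : ℕ, Nat.card {b : B // b ^ n = 1} = ∏ j, Nat.gcd n (q j ^ f j) := by
    intro n
    rw [← pi_count _ hqz n]
    apply Nat.card_congr
    refine (Equiv.subtypeEquiv (q := fun x : Additive B => n • x = 0)
        Additive.ofMul fun b => ?_).trans
      (Equiv.subtypeEquiv eB'.toEquiv fun x => ?_)
    · show b ^ n = 1 ↔ n • Additive.ofMul b = 0
      rw [← ofMul_pow]
      exact ⟨fun hb => by rw [hb]; rfl, fun hb => hb⟩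
    · show n • x = 0 ↔ n • eB' x = 0
      rw [← map_nsmul]
      exact ⟨fun hx => by rw [hx, map_zero], fun hx =>
        eB'.injective (by rw [hx, map_zero])⟩
  have hgcd : ∀ n : ℕ, ∏ i, Nat.gcd n (p i ^ e i) = ∏ j, Nat.gcd n (q j ^ f j) := by
    intro n; rw [← cA, ← cB]; exact h n
  obtain ⟨E⟩ := buildEquiv (fun i => p i ^ e i) (fun j => q j ^ f j)
    (fun v hv => core p e q f hp hq hgcd v hv)
  exact ⟨MulEquiv.toAdditive.symm ((eA'.trans E).trans eB'.symm)⟩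

theorem stmt7 {A B : Type*} [CommGroup A] [Fintype A] [CommGroup B] [Fintype B] {n : ℕ}
    (ρ₁ : A →* Matrix.GeneralLinearGroup (Fin n) ℂ)
    (ρ₂ : B →* Matrix.GeneralLinearGroup (Fin n) ℂ)
    (h₁ : Function.Injective ρ₁) (h₂ : Function.Injective ρ₂)
    (γ : A ≃ B)
    (hγ : ∀ a : A, ∃ T : Matrix.GeneralLinearGroup (Fin n) ℂ,
        ρ₂ (γ a) = T * ρ₁ a * T⁻¹) :
    Nonempty (A ≃* B) := by
  have horder : ∀ a : A, orderOf (γ a) = orderOf a := by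
    intro a
    obtain ⟨T, hT⟩ := hγ a
    calc orderOf (γ a) = orderOf (ρ₂ (γ a)) := (orderOf_injective ρ₂ h₂ _).symm
      _ = orderOf ((MulAut.conj T) (ρ₁ a)) := by rw [hT, MulAut.conj_apply]
      _ = orderOf (ρ₁ a) := MulEquiv.orderOf_eq _ _
      _ = orderOf a := orderOf_injective ρ₁ h₁ a
  apply main_abelian
  intro m
  apply Nat.card_congr
  refine Equiv.subtypeEquiv γ fun a => ?_
  rw [← orderOf_dvd_iff_pow_eq_one, ← orderOf_dvd_iff_pow_eq_one, horder a]
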